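/- Let N ∈ ℕ, let Lᵅⱼ : ℝᴺ → ℝ be continuously differentiable for α ∈ {0,1} and j ∈ {1,…,N}, let H : ℝᴺ → ℝ be differentiable, set Kᵅᵢⱼ = ∂Lᵅⱼ/∂zⁱ − ∂Lᵅᵢ/∂zʲ, and let z : ℝ² → ℝᴺ be a twice continuously differentiable solution of the multi-symplectic system Σ_{α,j} Kᵅᵢⱼ(z)·∂zʲ/∂xᵅ = (∂H/∂zⁱ)(z) for all i and all (x⁰,x¹). Then for each β ∈ {0,1} the pullback conservation law Σ_α ∂/∂xᵅ [ Σ_j Lᵅⱼ(z)·∂zʲ/∂xᵝ − δᵅ_β·L̃ ] = 0 holds, where L̃ = Σ_{α,j} Lᵅⱼ(z)·∂zʲ/∂xᵅ − H(z) and δᵅ_β is the Kronecker delta. -/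

import Mathlib

private lemma alg (N : ℕ) (Lv : Fin 2 → Fin N → ℝ) (lv : Fin 2 → Fin N → Fin N → ℝ)
    (dv : Fin 2 → Fin N → ℝ) (dd : Fin 2 → Fin 2 → Fin N → ℝ) (hv : Fin N → ℝ) (β : Fin 2)
    (hsym : ∀ a b j, dd a b j = dd b a j)
    (hs : ∀ i, ∑ a : Fin 2, ∑ j : Fin N, (lv a j i - lv a i j) * dv a j = hv i) :
    ∑ x : Fin 2, ((∑ j : Fin N, (Lv x j * dd x β j + dv β j * ∑ i : Fin N, dv x i * lv x j i))
      - (if x = β then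
          (∑ a : Fin 2, ∑ j : Fin N,
              (Lv a j * dd x a j + dv a j * ∑ i : Fin N, dv x i * lv a j i))
            - ∑ i : Fin N, dv x i * hv i
        else 0)) = 0 := by
  rw [Finset.sum_sub_distrib, Finset.sum_ite_eq' Finset.univ β, if_pos (Finset.mem_univ β),
    sub_eq_zero]
  -- split both sides
  have e1 : ∑ x : Fin 2, ∑ j : Fin N, Lv x j * dd x β j
      = ∑ a : Fin 2, ∑ j : Fin N, Lv a j * dd β a j :=
    Finset.sum_congr rfl fun a _ => Finset.sum_congr rfl fun j _ => by rw [hsym]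
  have hv' : ∑ i : Fin N, dv β i * hv i
      = ∑ a : Fin 2, ∑ i : Fin N, dv β i * (∑ j : Fin N, (lv a j i - lv a i j) * dv a j) := by
    calc ∑ i : Fin N, dv β i * hv i
        = ∑ i : Fin N, dv β i * (∑ a : Fin 2, ∑ j : Fin N, (lv a j i - lv a i j) * dv a j) :=
          Finset.sum_congr rfl fun i _ => by rw [hs]
      _ = ∑ i : Fin N, ∑ a : Fin 2,
            dv β i * (∑ j : Fin N, (lv a j i - lv a i j) * dv a j) :=
          Finset.sum_congr rfl fun i _ => Finset.mul_sum _ _ _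
      _ = ∑ a : Fin 2, ∑ i : Fin N,
            dv β i * (∑ j : Fin N, (lv a j i - lv a i j) * dv a j) := Finset.sum_comm
  have e2 : ∑ x : Fin 2, ∑ j : Fin N, dv β j * ∑ i : Fin N, dv x i * lv x j i
      = (∑ a : Fin 2, ∑ j : Fin N, dv a j * ∑ i : Fin N, dv β i * lv a j i)
        - ∑ i : Fin N, dv β i * hv i := by
    rw [hv', ← Finset.sum_sub_distrib]
    refine Finset.sum_congr rfl fun a _ => ?_
    rw [eq_sub_iff_add_eq]
    have eq1 : ∑ j : Fin N, ∑ i : Fin N, dv β j * (dv a i * lv a j i)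
        = ∑ j : Fin N, ∑ i : Fin N, dv β i * (dv a j * lv a i j) := Finset.sum_comm
    have eq2 : ∑ i : Fin N, ∑ j : Fin N, dv β i * ((lv a j i - lv a i j) * dv a j)
        = ∑ j : Fin N, ∑ i : Fin N, dv β i * ((lv a j i - lv a i j) * dv a j) :=
      Finset.sum_comm
    calc (∑ j : Fin N, dv β j * ∑ i : Fin N, dv a i * lv a j i)
          + ∑ i : Fin N, dv β i * ∑ j : Fin N, (lv a j i - lv a i j) * dv a j
        = (∑ j : Fin N, ∑ i : Fin N, dv β j * (dv a i * lv a j i))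
            + ∑ i : Fin N, ∑ j : Fin N, dv β i * ((lv a j i - lv a i j) * dv a j) := by
          rw [Finset.sum_congr rfl fun j _ => Finset.mul_sum _ _ _,
            Finset.sum_congr rfl fun i _ => Finset.mul_sum _ _ _]
      _ = (∑ j : Fin N, ∑ i : Fin N, dv β i * (dv a j * lv a i j))
            + ∑ j : Fin N, ∑ i : Fin N, dv β i * ((lv a j i - lv a i j) * dv a j) := by
          rw [eq1, eq2]
      _ = ∑ j : Fin N, ∑ i : Fin N, dv a j * (dv β i * lv a j i) := by
          rw [← Finset.sum_add_distrib]
          refine Finset.sum_congr rfl fun j _ => ?_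
          rw [← Finset.sum_add_distrib]
          refine Finset.sum_congr rfl fun i _ => by ring
      _ = ∑ j : Fin N, dv a j * ∑ i : Fin N, dv β i * lv a j i := by
          exact Finset.sum_congr rfl fun j _ => (Finset.mul_sum _ _ _).symm
  calc ∑ x : Fin 2, (∑ j : Fin N,
          (Lv x j * dd x β j + dv β j * ∑ i : Fin N, dv x i * lv x j i))
      = (∑ x : Fin 2, ∑ j : Fin N, Lv x j * dd x β j)
        + ∑ x : Fin 2, ∑ j : Fin N, dv β j * ∑ i : Fin N, dv x i * lv x j i := by
        rw [← Finset.sum_add_distrib]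
        exact Finset.sum_congr rfl fun x _ => Finset.sum_add_distrib
    _ = (∑ a : Fin 2, ∑ j : Fin N, Lv a j * dd β a j)
        + ((∑ a : Fin 2, ∑ j : Fin N, dv a j * ∑ i : Fin N, dv β i * lv a j i)
            - ∑ i : Fin N, dv β i * hv i) := by rw [e1, e2]
    _ = (∑ a : Fin 2, ∑ j : Fin N,
          (Lv a j * dd β a j + dv a j * ∑ i : Fin N, dv β i * lv a j i))
        - ∑ i : Fin N, dv β i * hv i := by
        rw [show ∑ a : Fin 2, ∑ j : Fin N,
            (Lv a j * dd β a j + dv a j * ∑ i : Fin N, dv β i * lv a j i)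
          = (∑ a : Fin 2, ∑ j : Fin N, Lv a j * dd β a j)
            + ∑ a : Fin 2, ∑ j : Fin N, dv a j * ∑ i : Fin N, dv β i * lv a j i from by
            rw [← Finset.sum_add_distrib]
            exact Finset.sum_congr rfl fun x _ => Finset.sum_add_distrib]
        ring

private lemma clm_eval {N : ℕ} (f : (Fin N → ℝ) →L[ℝ] ℝ) (w : Fin N → ℝ) :
    f w = ∑ i, w i * f (Pi.single i 1) := by
  conv_lhs => rw [← Finset.univ_sum_single w]
  rw [map_sum]
  refine Finset.sum_congr rfl fun i _ => ?_
  have h : Pi.single (M := fun _ : Fin N => ℝ) i (w i) = w i • (Pi.single i 1 : Fin N → ℝ) := by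
    ext k; by_cases hk : k = i <;> simp [Pi.single_apply, hk]
  rw [h, map_smul, smul_eq_mul]

theorem pullback_conservation_laws
    (N : ℕ)
    (L : Fin 2 → Fin N → (Fin N → ℝ) → ℝ)
    (hL : ∀ α j, ContDiff ℝ 1 (L α j))
    (H : (Fin N → ℝ) → ℝ) (hH : Differentiable ℝ H)
    (K : Fin 2 → Fin N → Fin N → (Fin N → ℝ) → ℝ)
    (hK : ∀ α i j v, K α i j v
      = fderiv ℝ (L α j) v (Pi.single i 1) - fderiv ℝ (L α i) v (Pi.single j 1))
    (z : (Fin 2 → ℝ) → (Fin N → ℝ)) (hz : ContDiff ℝ 2 z)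
    (Lt : (Fin 2 → ℝ) → ℝ)
    (hLt : ∀ q, Lt q
      = (∑ α : Fin 2, ∑ j : Fin N, L α j (z q) * fderiv ℝ z q (Pi.single α 1) j)
        - H (z q))
    (hsol : ∀ (i : Fin N) (q : Fin 2 → ℝ),
      (∑ α : Fin 2, ∑ j : Fin N, K α i j (z q) * fderiv ℝ z q (Pi.single α 1) j)
        = fderiv ℝ H (z q) (Pi.single i 1)) :
    ∀ (β : Fin 2) (q : Fin 2 → ℝ),
      ∑ α : Fin 2,
        fderiv ℝ (fun q' =>
            (∑ j : Fin N, L α j (z q') * fderiv ℝ z q' (Pi.single β 1) j)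
              - (if α = β then Lt q' else 0)) q (Pi.single α 1) = 0 := by
  intro β q
  have hz1 : Differentiable ℝ z := hz.differentiable two_ne_zero
  have hZ : Differentiable ℝ (fderiv ℝ z) :=
    (hz.fderiv_right (m := 1) (by norm_num)).differentiable one_ne_zero
  set D2 := fderiv ℝ (fderiv ℝ z) q with hD2
  have hsym : ∀ v w, D2 v w = D2 w v := hz.contDiffAt.isSymmSndFDerivAt (by simp [minSmoothness_of_isRCLikeNormedField])
  -- derivative CLM of each product term  (γ is the direction index inside fderiv z)
  set Gp : Fin 2 → Fin 2 → Fin N → ((Fin 2 → ℝ) →L[ℝ] ℝ) := fun α γ j =>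
    L α j (z q) • ((ContinuousLinearMap.proj j).comp (D2.flip (Pi.single γ 1)))
      + (fderiv ℝ z q (Pi.single γ 1) j) • ((fderiv ℝ (L α j) (z q)).comp (fderiv ℝ z q))
    with hGp
  have h4 : ∀ (α γ : Fin 2) (j : Fin N),
      HasFDerivAt (fun q' => L α j (z q') * fderiv ℝ z q' (Pi.single γ 1) j) (Gp α γ j) q := by
    intro α γ j
    have h1 : HasFDerivAt (fun q' => fderiv ℝ z q' (Pi.single γ 1))
        (D2.flip (Pi.single γ 1)) q := by
      simpa using (hZ q).hasFDerivAt.clm_apply (hasFDerivAt_const (Pi.single γ 1 : Fin 2 → ℝ) q)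
    have h2 : HasFDerivAt (fun q' => fderiv ℝ z q' (Pi.single γ 1) j)
        ((ContinuousLinearMap.proj j).comp (D2.flip (Pi.single γ 1))) q := by
      have h := ((ContinuousLinearMap.proj (R := ℝ) (φ := fun _ : Fin N => ℝ) j).hasFDerivAt
        (x := fderiv ℝ z q (Pi.single γ 1))).comp q h1
      exact h
    have h3 : HasFDerivAt (fun q' => L α j (z q'))
        ((fderiv ℝ (L α j) (z q)).comp (fderiv ℝ z q)) q :=
      (((hL α j).differentiable one_ne_zero) (z q)).hasFDerivAt.comp q (hz1 q).hasFDerivAt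
    exact h3.mul h2
  have h5 : HasFDerivAt (fun q' => H (z q'))
      ((fderiv ℝ H (z q)).comp (fderiv ℝ z q)) q :=
    (hH (z q)).hasFDerivAt.comp q (hz1 q).hasFDerivAt
  set GLt : (Fin 2 → ℝ) →L[ℝ] ℝ :=
    (∑ α : Fin 2, ∑ j : Fin N, Gp α α j) - (fderiv ℝ H (z q)).comp (fderiv ℝ z q) with hGLt
  have hLtD : HasFDerivAt Lt GLt q := by
    have hfun : Lt = fun q' =>
        (∑ α : Fin 2, ∑ j : Fin N, L α j (z q') * fderiv ℝ z q' (Pi.single α 1) j)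
          - H (z q') := funext hLt
    rw [hfun]
    exact (HasFDerivAt.fun_sum fun α _ => HasFDerivAt.fun_sum fun j _ => h4 α α j).sub h5
  have hFd : ∀ α : Fin 2,
      fderiv ℝ (fun q' =>
          (∑ j : Fin N, L α j (z q') * fderiv ℝ z q' (Pi.single β 1) j)
            - (if α = β then Lt q' else 0)) q
        = (∑ j : Fin N, Gp α β j) - (if α = β then GLt else 0) := by
    intro α
    by_cases h : α = β
    · subst h
      simp only [if_pos rfl, ↓reduceIte]
      exact ((HasFDerivAt.fun_sum fun j _ => h4 α α j).sub hLtD).fderiv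
    · simp only [if_neg h, sub_zero]
      exact (HasFDerivAt.fun_sum fun j _ => h4 α β j).fderiv
  simp only [hFd]
  have hite : ∀ (P : Prop) [Decidable P] (A B : (Fin 2 → ℝ) →L[ℝ] ℝ) (v : Fin 2 → ℝ),
      (if P then A else B) v = if P then A v else B v := by
    intro P _ A B v; split <;> rfl
  have hevL : ∀ (a : Fin 2) (j : Fin N) (g : Fin 2),
      fderiv ℝ (L a j) (z q) (fderiv ℝ z q (Pi.single g 1))
        = ∑ i, fderiv ℝ z q (Pi.single g 1) i * fderiv ℝ (L a j) (z q) (Pi.single i 1) :=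
    fun a j g => clm_eval _ _
  have hevH : ∀ (g : Fin 2),
      fderiv ℝ H (z q) (fderiv ℝ z q (Pi.single g 1))
        = ∑ i, fderiv ℝ z q (Pi.single g 1) i * fderiv ℝ H (z q) (Pi.single i 1) :=
    fun g => clm_eval _ _
  simp only [hGp, hGLt, ContinuousLinearMap.sub_apply, ContinuousLinearMap.coe_sum',
    Finset.sum_apply, ContinuousLinearMap.sum_apply, ContinuousLinearMap.add_apply,
    ContinuousLinearMap.smul_apply, ContinuousLinearMap.comp_apply,
    ContinuousLinearMap.flip_apply, ContinuousLinearMap.proj_apply, smul_eq_mul,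
    hite,
    ContinuousLinearMap.zero_apply, hevL, hevH]
  have hs' : ∀ i : Fin N,
      ∑ a : Fin 2, ∑ j : Fin N,
          (fderiv ℝ (L a j) (z q) (Pi.single i 1) - fderiv ℝ (L a i) (z q) (Pi.single j 1))
            * fderiv ℝ z q (Pi.single a 1) j
        = fderiv ℝ H (z q) (Pi.single i 1) := by
    intro i
    rw [← hsol i q]
    exact Finset.sum_congr rfl fun a _ => Finset.sum_congr rfl fun j _ => by rw [hK]
  exact alg N (fun a j => L a j (z q))
    (fun a j i => fderiv ℝ (L a j) (z q) (Pi.single i 1))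
    (fun g j => fderiv ℝ z q (Pi.single g 1) j)
    (fun a b j => D2 (Pi.single a 1) (Pi.single b 1) j)
    (fun i => fderiv ℝ H (z q) (Pi.single i 1)) β
    (fun a b j => congrFun (hsym (Pi.single a 1) (Pi.single b 1)) j) hs'
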